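/- Let n ≥ 2. For every integer k ≥ 1 there is a constant C_k, depending only on n and k, such that for every θ ∈ (0,1), every y in the closed upper half-space, and every x in the closed upper half-space with A(x,y,θ) > 0, the function x ↦ A(x,y,θ) is k times differentiable at x and its k-th iterated derivative satisfies ‖D_x^k A(x,y,θ)‖ ≤ C_k A(x,y,θ)^{1−k}. -/

import Mathlib

open Set

section translation

variable {F G : Type*} [NormedAddCommGroup F] [NormedSpace ℝ F]
  [NormedAddCommGroup G] [NormedSpace ℝ G]

theorem my_fderiv_comp_add_right (f : F → G) (b : F) (x : F) :
    fderiv ℝ (fun w => f (w + b)) x = fderiv ℝ f (x + b) := by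
  by_cases h : DifferentiableAt ℝ f (x + b)
  · have h1 : HasFDerivAt (fun w : F => w + b) (ContinuousLinearMap.id ℝ F) x :=
      (hasFDerivAt_id x).add_const b
    have := (h.hasFDerivAt.comp x h1).fderiv
    simpa [Function.comp_def] using this
  · rw [fderiv_zero_of_not_differentiableAt h, fderiv_zero_of_not_differentiableAt]
    intro hc
    apply h
    have hc' : DifferentiableAt ℝ (fun v => f (v + b)) ((x + b) - b) := by simpa using hc
    have h2 : DifferentiableAt ℝ ((fun v => f (v + b)) ∘ (fun w => w - b)) (x + b) :=
      DifferentiableAt.comp (x + b) hc' (differentiableAt_id.sub_const b)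
    simpa [Function.comp_def, sub_add_cancel] using h2

theorem my_iteratedFDeriv_comp_add_right (f : F → G) (b : F) (k : ℕ) (x : F) :
    iteratedFDeriv ℝ k (fun w => f (w + b)) x = iteratedFDeriv ℝ k f (x + b) := by
  induction k generalizing x with
  | zero => ext m; simp
  | succ k IH =>
    ext m
    rw [iteratedFDeriv_succ_apply_left, iteratedFDeriv_succ_apply_left]
    have h1 : iteratedFDeriv ℝ k (fun w => f (w + b)) =
        fun w => iteratedFDeriv ℝ k f (w + b) := funext IH
    rw [h1, my_fderiv_comp_add_right (iteratedFDeriv ℝ k f) b x]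

end translation

section normbound

variable {F : Type*} [NormedAddCommGroup F] [InnerProductSpace ℝ F] [FiniteDimensional ℝ F]

/-- Uniform bound for the iterated derivatives of the norm away from the origin. -/
theorem my_norm_iteratedFDeriv_norm_le (F : Type*) [NormedAddCommGroup F]
    [InnerProductSpace ℝ F] [FiniteDimensional ℝ F] (k : ℕ) :
    ∃ C : ℝ, 0 < C ∧ ∀ w : F, w ≠ 0 →
      ‖iteratedFDeriv ℝ k (fun v : F => ‖v‖) w‖ ≤ C * ‖w‖ ^ ((1 : ℝ) - k) := by
  set s : Set F := {v | v ≠ 0} with hs_def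
  have hs : IsOpen s := isOpen_compl_singleton
  have hcd : ContDiffOn ℝ (⊤ : ℕ∞) (fun v : F => ‖v‖) s := fun v hv =>
    (contDiffAt_norm ℝ hv).contDiffWithinAt
  have hcont : ContinuousOn (fun v : F => ‖iteratedFDeriv ℝ k (fun v : F => ‖v‖) v‖) s := by
    have h1 := hcd.continuousOn_iteratedFDerivWithin (m := k)
      (by exact_mod_cast (le_top : (k : ℕ∞) ≤ ⊤)) hs.uniqueDiffOn
    exact (h1.congr fun v hv =>
      (iteratedFDerivWithin_of_isOpen (f := fun v : F => ‖v‖) k hs hv).symm).norm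
  have hsub : Metric.sphere (0 : F) 1 ⊆ s := by
    intro v hv
    simp only [Metric.mem_sphere, dist_zero_right] at hv
    intro h
    rw [h] at hv
    simp at hv
  obtain ⟨M, hM⟩ := (isCompact_sphere (0 : F) 1).exists_bound_of_continuousOn (hcont.mono hsub)
  refine ⟨max M 1, lt_of_lt_of_le one_pos (le_max_right _ _), ?_⟩
  intro w hw
  set c : ℝ := ‖w‖ with hc_def
  have hc : 0 < c := norm_pos_iff.2 hw
  set u : F := c⁻¹ • w with hu_def
  have hu : ‖u‖ = 1 := by
    rw [hu_def, norm_smul, norm_inv, norm_norm, inv_mul_cancel₀ hc.ne']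
  have hus : u ∈ s := by
    intro h0
    rw [h0] at hu; simp at hu
  set g : F →L[ℝ] F := c⁻¹ • ContinuousLinearMap.id ℝ F with hg_def
  have hgapp : ∀ v : F, g v = c⁻¹ • v := fun v => rfl
  have hgpre : g ⁻¹' s = s := by
    ext v
    show c⁻¹ • v ≠ 0 ↔ v ≠ 0
    constructor
    · intro h h0; exact h (by rw [h0, smul_zero])
    · intro h; exact smul_ne_zero (inv_ne_zero hc.ne') h
  have hgw : g w ∈ s := by rw [← hgpre] at hus ⊢; exact hus
  -- the composition identity within s
  have hcomp := g.iteratedFDerivWithin_comp_right (f := fun v : F => ‖v‖) hcd hs.uniqueDiffOn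
    (by rw [hgpre]; exact hs.uniqueDiffOn) (x := w) hgw (i := k)
    (by exact_mod_cast (le_top : (k : ℕ∞) ≤ ⊤))
  rw [hgpre] at hcomp
  -- the scaling identity ‖v‖ = c • ‖g v‖
  have hfun : (fun v : F => ‖v‖) = c • ((fun v : F => ‖v‖) ∘ g) := by
    funext v
    show ‖v‖ = c * ‖c⁻¹ • v‖
    rw [norm_smul, Real.norm_eq_abs, abs_of_pos (inv_pos.2 hc)]
    field_simp
  have hcdg : ContDiffOn ℝ (⊤ : ℕ∞) ((fun v : F => ‖v‖) ∘ g) s := by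
    rw [← hgpre]
    exact hcd.comp_continuousLinearMap g
  have key : iteratedFDeriv ℝ k (fun v : F => ‖v‖) w =
      c • (iteratedFDeriv ℝ k (fun v : F => ‖v‖) u).compContinuousLinearMap fun _ => g := by
    have A2 : iteratedFDerivWithin ℝ k (c • ((fun v : F => ‖v‖) ∘ g)) s w =
        c • iteratedFDerivWithin ℝ k ((fun v : F => ‖v‖) ∘ g) s w :=
      iteratedFDerivWithin_const_smul_apply
        ((hcdg w hw).of_le (by exact_mod_cast (le_top : (k : ℕ∞) ≤ ⊤))) hs.uniqueDiffOn (by exact hw)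
    calc iteratedFDeriv ℝ k (fun v : F => ‖v‖) w
        = iteratedFDerivWithin ℝ k (fun v : F => ‖v‖) s w :=
          (iteratedFDerivWithin_of_isOpen k hs (by exact hw)).symm
      _ = iteratedFDerivWithin ℝ k (c • ((fun v : F => ‖v‖) ∘ g)) s w := by rw [← hfun]
      _ = c • iteratedFDerivWithin ℝ k ((fun v : F => ‖v‖) ∘ g) s w := A2
      _ = c • (iteratedFDerivWithin ℝ k (fun v : F => ‖v‖) s (g w)).compContinuousLinearMap
            (fun _ => g) := by rw [hcomp]
      _ = c • (iteratedFDeriv ℝ k (fun v : F => ‖v‖) u).compContinuousLinearMap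
            (fun _ => g) := by
            rw [iteratedFDerivWithin_of_isOpen k hs hgw]
            rfl
  have hgnorm : ‖g‖ ≤ c⁻¹ := by
    refine ContinuousLinearMap.opNorm_le_bound _ (by positivity) fun v => ?_
    rw [hgapp, norm_smul, Real.norm_eq_abs, abs_of_pos (inv_pos.2 hc)]
  have hMu : ‖iteratedFDeriv ℝ k (fun v : F => ‖v‖) u‖ ≤ max M 1 := by
    refine le_trans (le_trans (le_abs_self _) ?_) (le_max_left _ _)
    have := hM u (by simpa [Metric.mem_sphere, dist_zero_right] using hu)
    simpa using this
  have hXle : ‖(iteratedFDeriv ℝ k (fun v : F => ‖v‖) u).compContinuousLinearMap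
      fun _ => g‖ ≤ max M 1 * (c⁻¹) ^ k := by
    refine le_trans (ContinuousMultilinearMap.norm_compContinuousLinearMap_le _ _) ?_
    refine mul_le_mul hMu ?_ (by positivity) (le_trans zero_le_one (le_max_right M 1))
    calc (∏ _i : Fin k, ‖g‖) = ‖g‖ ^ k := by simp
      _ ≤ (c⁻¹) ^ k := pow_le_pow_left₀ (norm_nonneg _) hgnorm k
  have hbound : ‖iteratedFDeriv ℝ k (fun v : F => ‖v‖) w‖ ≤ c * (max M 1 * (c⁻¹) ^ k) := by
    rw [key]
    refine le_trans (ContinuousMultilinearMap.opNorm_smul_le c _) ?_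
    rw [Real.norm_eq_abs, abs_of_pos hc]
    exact mul_le_mul_of_nonneg_left hXle hc.le
  refine hbound.trans_eq ?_
  have : c ^ ((1 : ℝ) - k) = c * (c⁻¹) ^ k := by
    rw [Real.rpow_sub hc, Real.rpow_one, Real.rpow_natCast, div_eq_mul_inv, inv_pow]
  rw [this]; ring

end normbound

section setup

variable {n : ℕ}

noncomputable abbrev myF (n : ℕ) := WithLp 2 (EuclideanSpace ℝ (Fin n) × ℝ)

noncomputable def myL (n : ℕ) : EuclideanSpace ℝ (Fin n) →L[ℝ] myF n :=
  (WithLp.prodContinuousLinearEquiv 2 ℝ (EuclideanSpace ℝ (Fin n)) ℝ).symm.toContinuousLinearMap.comp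
      (ContinuousLinearMap.inl ℝ (EuclideanSpace ℝ (Fin n)) ℝ)

theorem myL_fst (x : EuclideanSpace ℝ (Fin n)) : (myL n x).fst = x := rfl
theorem myL_snd (x : EuclideanSpace ℝ (Fin n)) : (myL n x).snd = 0 := rfl

theorem myF_norm (w : myF n) : ‖w‖ = Real.sqrt (‖w.fst‖ ^ 2 + w.snd ^ 2) := by
  rw [WithLp.prod_norm_eq_of_nat 2 (by norm_num) w, Real.sqrt_eq_rpow]
  norm_num [Real.norm_eq_abs, sq_abs]

theorem myL_norm_le : ‖myL n‖ ≤ 1 := by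
  refine ContinuousLinearMap.opNorm_le_bound _ zero_le_one fun x => ?_
  rw [myF_norm, myL_fst, myL_snd]
  simp [Real.sqrt_sq (norm_nonneg x)]

end setup

/-- `A(x,y,θ) = (θ D(x,y)² + (1−θ) Ď(x,y)²)^{1/2}`, where `D(x,y)² = |x−y|²` and
`Ď(x,y)² = |x−y|² − (xₙ−yₙ)² + (xₙ+yₙ)² ( = |x'−y'|² + (xₙ+yₙ)²)`,
the `n`-th coordinate being the coordinate `i`. -/
noncomputable def greenA {n : ℕ} (i : Fin n) (x y : EuclideanSpace ℝ (Fin n)) (θ : ℝ) : ℝ :=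
  Real.sqrt (θ * ‖x - y‖ ^ 2 +
    (1 - θ) * (‖x - y‖ ^ 2 - (x i - y i) ^ 2 + (x i + y i) ^ 2))

theorem main_aux (n : ℕ) (i : Fin n) (k : ℕ) :
    ∃ C : ℝ, 0 < C ∧
      ∀ θ ∈ Set.Ioo (0 : ℝ) 1, ∀ y : EuclideanSpace ℝ (Fin n),
        ∀ x : EuclideanSpace ℝ (Fin n),
          0 < greenA i x y θ →
          ContDiffAt ℝ k (fun x => greenA i x y θ) x ∧
          ‖iteratedFDeriv ℝ k (fun x => greenA i x y θ) x‖ ≤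
            C * greenA i x y θ ^ ((1 : ℝ) - k) := by
  obtain ⟨C, hC, hbound⟩ := my_norm_iteratedFDeriv_norm_le (myF n) k
  refine ⟨C, hC, ?_⟩
  rintro θ ⟨hθ0, hθ1⟩ y x hA
  set z : EuclideanSpace ℝ (Fin n) :=
    y - ((2 - 2 * θ) * y i) • EuclideanSpace.single i (1 : ℝ) with hz_def
  set r : ℝ := 2 * Real.sqrt (θ * (1 - θ)) * y i with hr_def
  set b : myF n := (WithLp.equiv 2 _).symm (-z, r) with hb_def
  have hfst : ∀ v : EuclideanSpace ℝ (Fin n), (myL n v + b).fst = v - z := by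
    intro v; show v + (-z) = v - z; rw [sub_eq_add_neg]
  have hsnd : ∀ v : EuclideanSpace ℝ (Fin n), (myL n v + b).snd = r := by
    intro v; show (0 : ℝ) + r = r; rw [zero_add]
  have hr2 : r ^ 2 = 4 * (θ * (1 - θ)) * (y i) ^ 2 := by
    have h1 : Real.sqrt (θ * (1 - θ)) ^ 2 = θ * (1 - θ) :=
      Real.sq_sqrt (by nlinarith)
    rw [hr_def]; nlinarith [h1]
  have hzsub : ∀ v : EuclideanSpace ℝ (Fin n),
      v - z = (v - y) + ((2 - 2 * θ) * y i) • EuclideanSpace.single i (1 : ℝ) := by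
    intro v; rw [hz_def]; abel
  have hnormsub : ∀ v : EuclideanSpace ℝ (Fin n),
      ‖v - z‖ ^ 2 = ‖v - y‖ ^ 2 + 2 * ((2 - 2 * θ) * y i) * (v i - y i)
        + ((2 - 2 * θ) * y i) ^ 2 := by
    intro v
    rw [hzsub v, norm_add_sq_real]
    have h2 : (inner ℝ (v - y) (EuclideanSpace.single i (1 : ℝ)) : ℝ) = v i - y i := by
      rw [EuclideanSpace.inner_single_right]
      simp
    have hin : (inner ℝ (v - y)
        (((2 - 2 * θ) * y i) • EuclideanSpace.single i (1 : ℝ)) : ℝ) =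
        ((2 - 2 * θ) * y i) * (v i - y i) := by
      rw [real_inner_smul_right, h2]
    rw [hin, norm_smul]
    simp only [EuclideanSpace.norm_single, Real.norm_eq_abs, mul_pow, sq_abs, norm_one, mul_one]
    ring
  have hgreen : ∀ v : EuclideanSpace ℝ (Fin n),
      greenA i v y θ = ‖myL n v + b‖ := by
    intro v
    rw [myF_norm, hfst, hsnd, greenA]
    congr 1
    rw [hnormsub v, hr2]
    ring
  have hne : myL n x + b ≠ 0 := by
    intro h0
    rw [hgreen x, h0, norm_zero] at hA
    exact lt_irrefl 0 hA
  have hfeq : (fun v => greenA i v y θ) = fun v => ‖myL n v + b‖ := funext hgreen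
  have hφ : ContDiff ℝ (k : ℕ∞) fun v : EuclideanSpace ℝ (Fin n) => myL n v + b :=
    (myL n).contDiff.add contDiff_const
  constructor
  · rw [hfeq]
    exact (contDiffAt_norm ℝ hne).comp x hφ.contDiffAt
  · rw [hfeq]
    -- set up the within-sets composition
    set s : Set (myF n) := {w | w + b ≠ 0} with hs_def
    have hs : IsOpen s := by
      have : s = (fun w : myF n => w + b) ⁻¹' {0}ᶜ := rfl
      rw [this]
      exact (isOpen_compl_singleton).preimage (continuous_id.add continuous_const)
    have hNb : ContDiffOn ℝ (⊤ : ℕ∞) (fun w : myF n => ‖w + b‖) s := by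
      intro w hw
      exact ((contDiffAt_norm ℝ hw).comp w
        ((contDiff_id.add contDiff_const).contDiffAt)).contDiffWithinAt
    have hxs : myL n x ∈ s := hne
    have hpre : IsOpen ((myL n) ⁻¹' s) := hs.preimage (myL n).continuous
    have hxpre : x ∈ (myL n) ⁻¹' s := hxs
    haveI : ContinuousSMul ℝ (myF n) := inferInstance
    have hcomp := (myL n).iteratedFDerivWithin_comp_right (f := fun w : myF n => ‖w + b‖)
      hNb hs.uniqueDiffOn hpre.uniqueDiffOn hxs (i := k)
      (by exact_mod_cast (le_top : (k : ℕ∞) ≤ ⊤))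
    have e1 : iteratedFDeriv ℝ k (fun v => ‖myL n v + b‖) x =
        iteratedFDerivWithin ℝ k (fun v => ‖myL n v + b‖) ((myL n) ⁻¹' s) x :=
      (iteratedFDerivWithin_of_isOpen k hpre hxpre).symm
    have e2 : iteratedFDerivWithin ℝ k (fun v => ‖myL n v + b‖) ((myL n) ⁻¹' s) x =
        iteratedFDerivWithin ℝ k ((fun w : myF n => ‖w + b‖) ∘ (myL n)) ((myL n) ⁻¹' s) x := rfl
    have e3 : iteratedFDerivWithin ℝ k (fun w : myF n => ‖w + b‖) s (myL n x) =
        iteratedFDeriv ℝ k (fun w : myF n => ‖w + b‖) (myL n x) :=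
      iteratedFDerivWithin_of_isOpen k hs hxs
    have e4 : iteratedFDeriv ℝ k (fun w : myF n => ‖w + b‖) (myL n x) =
        iteratedFDeriv ℝ k (fun w : myF n => ‖w‖) (myL n x + b) :=
      my_iteratedFDeriv_comp_add_right (fun w : myF n => ‖w‖) b k (myL n x)
    rw [e1, e2, hcomp]
    calc ‖(iteratedFDerivWithin ℝ k (fun w : myF n => ‖w + b‖) s
          (myL n x)).compContinuousLinearMap fun _ => myL n‖
        ≤ ‖iteratedFDerivWithin ℝ k (fun w : myF n => ‖w + b‖) s (myL n x)‖ *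
            ∏ _j : Fin k, ‖myL n‖ :=
          ContinuousMultilinearMap.norm_compContinuousLinearMap_le _ _
      _ ≤ ‖iteratedFDerivWithin ℝ k (fun w : myF n => ‖w + b‖) s (myL n x)‖ * 1 := by
          refine mul_le_mul_of_nonneg_left ?_ (norm_nonneg _)
          calc (∏ _j : Fin k, ‖myL n‖) = ‖myL n‖ ^ k := by simp
            _ ≤ 1 ^ k := pow_le_pow_left₀ (norm_nonneg _) myL_norm_le k
            _ = 1 := one_pow k
      _ = ‖iteratedFDeriv ℝ k (fun w : myF n => ‖w‖) (myL n x + b)‖ := by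
          rw [mul_one, e3, e4]
      _ ≤ C * ‖myL n x + b‖ ^ ((1 : ℝ) - k) := hbound _ hne
      _ = C * greenA i x y θ ^ ((1 : ℝ) - k) := by rw [hgreen x]

/-- For `n ≥ 2` and every integer `k ≥ 1` there is `C_k = C(n,k)` such that
for every `θ ∈ (0,1)`, every `y` in the closed upper half-space and every `x` in the closed
upper half-space with `A(x,y,θ) > 0`, the map `x ↦ A(x,y,θ)` is `k` times differentiable at
`x` with `‖Dₓᵏ A(x,y,θ)‖ ≤ C_k A(x,y,θ)^{1−k}`. -/
theorem stmt_7 (n : ℕ) (hn : 2 ≤ n) (k : ℕ) (hk : 1 ≤ k) :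
    ∃ C : ℝ, 0 < C ∧
      ∀ θ ∈ Set.Ioo (0 : ℝ) 1, ∀ y : EuclideanSpace ℝ (Fin n),
        0 ≤ y ⟨n - 1, by omega⟩ →
        ∀ x : EuclideanSpace ℝ (Fin n), 0 ≤ x ⟨n - 1, by omega⟩ →
          0 < greenA ⟨n - 1, by omega⟩ x y θ →
          ContDiffAt ℝ k (fun x => greenA ⟨n - 1, by omega⟩ x y θ) x ∧
          ‖iteratedFDeriv ℝ k (fun x => greenA ⟨n - 1, by omega⟩ x y θ) x‖ ≤
            C * greenA ⟨n - 1, by omega⟩ x y θ ^ ((1 : ℝ) - k) := by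
  obtain ⟨C, hC, h⟩ := main_aux n ⟨n - 1, by omega⟩ k
  exact ⟨C, hC, fun θ hθ y _ x _ hA => h θ hθ y x hA⟩
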